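/- arXiv:0806.4206 — 2 statements merged into one kernel-verified Lean document; each statement's English description precedes it below -/
import Mathlib

section
/- Let (h_n) and (c_n) be decreasing sequences of positive numbers tending to 0 with 0 < h_n < π and 0 < c_n < π. Then there exists an even 2π-periodic C² function f : ℝ → ℝ such that: (1) f(0) = 0 and f is strictly increasing on [0,π]; (2) f(c_n) ≤ h_n for all n ≥ 1. -/
open Real Filter MeasureTheory intervalIntegral Set

namespace Stmt1Aux

/-- step-like minorant -/
noncomputable def Hf (h X : ℕ → ℝ) (u : ℝ) : ℝ :=
  sInf (insert (h 0) (h '' {m | u ≤ X m}))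

noncomputable def Af (h X : ℕ → ℝ) (s : ℝ) : ℝ := ∫ u in (0:ℝ)..s, Hf h X u

noncomputable def Vf (h X : ℕ → ℝ) (s : ℝ) : ℝ := Af h X s / s

noncomputable def Bf (h X : ℕ → ℝ) (x : ℝ) : ℝ := ∫ s in (0:ℝ)..x, Vf h X s

noncomputable def Gf (h X : ℕ → ℝ) (x : ℝ) : ℝ := ∫ s in (0:ℝ)..x, Bf h X s

variable {h X : ℕ → ℝ}

section

variable (hp : ∀ n, 0 < h n) (hXp : ∀ n, 0 < X n)
  (hhlim : Tendsto h atTop (nhds 0)) (hXlim : Tendsto X atTop (nhds 0))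

lemma Hbdd (u : ℝ) (hp : ∀ n, 0 < h n) :
    BddBelow (insert (h 0) (h '' {m | u ≤ X m})) := by
  refine ⟨0, ?_⟩
  rintro x (rfl | ⟨m, hm, rfl⟩) <;> exact (hp _).le

include hp in
lemma Hnonneg (u : ℝ) : 0 ≤ Hf h X u := by
  apply Real.sInf_nonneg
  rintro x (rfl | ⟨m, hm, rfl⟩) <;> exact (hp _).le

include hp in
lemma Hle {u : ℝ} {n : ℕ} (hu : u ≤ X n) : Hf h X u ≤ h n :=
  csInf_le (Hbdd u hp) (Set.mem_insert_of_mem _ ⟨n, hu, rfl⟩)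

include hp in
lemma Hmono : Monotone (Hf h X) := by
  intro u u' huu'
  apply csInf_le_csInf (Hbdd u hp) ⟨h 0, Set.mem_insert _ _⟩
  apply Set.insert_subset_insert
  exact Set.image_mono fun m hm => le_trans huu' hm

include hp hXp hhlim in
lemma Hzero {u : ℝ} (hu : u ≤ 0) : Hf h X u = 0 := by
  refine le_antisymm ?_ (Hnonneg hp u)
  exact ge_of_tendsto hhlim (Eventually.of_forall fun n => Hle hp (hu.trans (hXp n).le))

include hp hXlim in
lemma Hpos {u : ℝ} (hu : 0 < u) : 0 < Hf h X u := by
  have hfin : ({m | u ≤ X m}).Finite := by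
    obtain ⟨N, hN⟩ := (hXlim.eventually (eventually_lt_nhds hu)).exists_forall_of_atTop
    exact (Set.finite_Iio N).subset fun m hm => lt_of_not_ge fun hNm => absurd hm (not_le.2 (hN m hNm))
  have hS : (insert (h 0) (h '' {m | u ≤ X m})).Finite := ((hfin.image h).insert _)
  have hmem := (Set.insert_nonempty _ _).csInf_mem hS
  rcases hmem with hm | ⟨m, _, hm⟩
  · rw [Hf, hm]; exact hp 0
  · rw [Hf, ← hm]; exact hp m

include hp hXp hhlim in
lemma Htend : Tendsto (Hf h X) (nhds 0) (nhds 0) := by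
  rw [Metric.tendsto_nhds_nhds]
  intro ε εpos
  obtain ⟨n, hn⟩ := (hhlim.eventually (eventually_lt_nhds εpos)).exists
  refine ⟨X n, hXp n, fun {u} hu => ?_⟩
  simp only [Real.dist_eq, sub_zero] at hu ⊢
  rw [abs_of_nonneg (Hnonneg hp u)]
  exact lt_of_le_of_lt (Hle hp ((le_abs_self u).trans hu.le)) hn

include hp in
lemma Hint (a b : ℝ) : IntervalIntegrable (Hf h X) volume a b :=
  ((Hmono hp).monotoneOn _).intervalIntegrable

include hp in
lemma Acont : Continuous (Af h X) := continuous_primitive (Hint hp) 0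

include hp hXp hhlim in
lemma Azero {s : ℝ} (hs : s ≤ 0) : Af h X s = 0 := by
  rw [Af, integral_symm, intervalIntegral.integral_congr (g := fun _ => (0:ℝ))
    (fun u hu => Hzero hp hXp hhlim ?_), intervalIntegral.integral_zero, neg_zero]
  rcases Set.mem_uIcc.1 hu with ⟨_, h2⟩ | ⟨_, h2⟩
  · exact h2
  · exact h2.trans hs

include hp in
lemma Anonneg {s : ℝ} (hs : 0 ≤ s) : 0 ≤ Af h X s :=
  intervalIntegral.integral_nonneg hs fun u _ => Hnonneg hp u

include hp in
lemma Aupper {s : ℝ} (hs : 0 ≤ s) : Af h X s ≤ s * Hf h X s := by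
  have := intervalIntegral.integral_mono_on (μ := volume) hs (Hint hp 0 s)
    (_root_.intervalIntegrable_const (c := Hf h X s)) (fun u hu => Hmono hp hu.2)
  simpa [Af] using this

include hp hXlim in
lemma Apos {s : ℝ} (hs : 0 < s) : 0 < Af h X s := by
  have hsplit : Af h X s = (∫ u in (0:ℝ)..(s/2), Hf h X u) + ∫ u in (s/2)..s, Hf h X u :=
    (integral_add_adjacent_intervals (Hint hp 0 (s/2)) (Hint hp (s/2) s)).symm
  have h1 : 0 ≤ ∫ u in (0:ℝ)..(s/2), Hf h X u :=
    intervalIntegral.integral_nonneg (by linarith) fun u _ => Hnonneg hp u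
  have h2 : (s - s/2) * Hf h X (s/2) ≤ ∫ u in (s/2)..s, Hf h X u := by
    have := intervalIntegral.integral_mono_on (μ := volume) (by linarith : s/2 ≤ s)
      (_root_.intervalIntegrable_const (c := Hf h X (s/2))) (Hint hp (s/2) s)
      (fun u hu => Hmono hp hu.1)
    simpa [mul_comm] using this
  have h3 : 0 < (s - s/2) * Hf h X (s/2) :=
    mul_pos (by linarith) (Hpos hp hXlim (by linarith))
  linarith

include hp hXp hhlim hXlim in
lemma Vnonneg (s : ℝ) : 0 ≤ Vf h X s := by
  rcases le_or_gt s 0 with hs | hs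
  · rw [Vf, Azero hp hXp hhlim hs, zero_div]
  · exact div_nonneg (Anonneg hp hs.le) hs.le

include hp hXp hhlim in
lemma VleH (s : ℝ) : Vf h X s ≤ Hf h X s := by
  rcases le_or_gt s 0 with hs | hs
  · rw [Vf, Azero hp hXp hhlim hs, zero_div]
    exact Hnonneg hp s
  · rw [Vf, div_le_iff₀ hs, mul_comm]
    exact Aupper hp hs.le

include hp hXlim in
lemma Vpos {s : ℝ} (hs : 0 < s) : 0 < Vf h X s :=
  div_pos (Apos hp hXlim hs) hs

include hp hXp hhlim hXlim in
lemma Vcont : Continuous (Vf h X) := by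
  rw [continuous_iff_continuousAt]
  intro x
  rcases eq_or_ne x 0 with rfl | hx
  · have h0 : Vf h X 0 = 0 := by
      rw [Vf, Azero hp hXp hhlim le_rfl, zero_div]
    rw [ContinuousAt, h0]
    exact squeeze_zero (Vnonneg hp hXp hhlim hXlim) (VleH hp hXp hhlim) (Htend hp hXp hhlim)
  · exact ((Acont hp).continuousAt.div continuousAt_id hx)

include hp hXp hhlim hXlim in
lemma BhasDeriv (x : ℝ) : HasDerivAt (Bf h X) (Vf h X x) x :=
  ((Vcont hp hXp hhlim hXlim).integral_hasStrictDerivAt 0 x).hasDerivAt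

include hp hXp hhlim hXlim in
lemma Bcont : Continuous (Bf h X) :=
  continuous_iff_continuousAt.2 fun x => (BhasDeriv hp hXp hhlim hXlim x).continuousAt

include hp hXp hhlim hXlim in
lemma Bnonneg {x : ℝ} (hx : 0 ≤ x) : 0 ≤ Bf h X x :=
  intervalIntegral.integral_nonneg hx fun s _ => Vnonneg hp hXp hhlim hXlim s

include hp hXp hhlim hXlim in
lemma Bpos {x : ℝ} (hx : 0 < x) : 0 < Bf h X x :=
  intervalIntegral_pos_of_pos_on
    ((Vcont hp hXp hhlim hXlim).intervalIntegrable 0 x)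
    (fun s hs => Vpos hp hXlim hs.1) hx

include hp hXp hhlim hXlim in
lemma Bupper {x : ℝ} (hx : 0 ≤ x) : Bf h X x ≤ x * Hf h X x := by
  have := intervalIntegral.integral_mono_on (μ := volume) hx
    ((Vcont hp hXp hhlim hXlim).intervalIntegrable 0 x)
    (_root_.intervalIntegrable_const (c := Hf h X x))
    (fun s hs => (VleH hp hXp hhlim s).trans (Hmono hp hs.2))
  simpa [Bf] using this

include hp hXp hhlim hXlim in
lemma GhasDeriv (x : ℝ) : HasDerivAt (Gf h X) (Bf h X x) x :=
  ((Bcont hp hXp hhlim hXlim).integral_hasStrictDerivAt 0 x).hasDerivAt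

lemma Gzero : Gf h X 0 = 0 := integral_same

include hp hXp hhlim hXlim in
lemma Gsub {a b : ℝ} : Gf h X b - Gf h X a = ∫ s in a..b, Bf h X s := by
  rw [Gf, Gf, sub_eq_iff_eq_add]
  rw [← integral_add_adjacent_intervals ((Bcont hp hXp hhlim hXlim).intervalIntegrable 0 a)
    ((Bcont hp hXp hhlim hXlim).intervalIntegrable a b)]
  ring_nf

include hp hXp hhlim hXlim in
lemma Gmono : StrictMonoOn (Gf h X) (Set.Ici 0) := by
  intro a ha b _ hab
  have hpos : 0 < ∫ s in a..b, Bf h X s :=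
    intervalIntegral_pos_of_pos_on ((Bcont hp hXp hhlim hXlim).intervalIntegrable a b)
      (fun s hs => Bpos hp hXp hhlim hXlim (lt_of_le_of_lt ha hs.1)) hab
  have := Gsub hp hXp hhlim hXlim (a := a) (b := b)
  linarith

include hp hXp hhlim hXlim in
lemma Gupper {x : ℝ} (hx : 0 ≤ x) : Gf h X x ≤ x * (x * Hf h X x) := by
  have hB : Gf h X x ≤ x * Bf h X x := by
    have := intervalIntegral.integral_mono_on (μ := volume) hx
      ((Bcont hp hXp hhlim hXlim).intervalIntegrable 0 x)
      (_root_.intervalIntegrable_const (c := Bf h X x))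
      (fun s hs => ?_)
    · simpa [Gf] using this
    · have : Bf h X x - Bf h X s = ∫ u in s..x, Vf h X u := by
        rw [Bf, Bf, sub_eq_iff_eq_add,
          ← integral_add_adjacent_intervals ((Vcont hp hXp hhlim hXlim).intervalIntegrable 0 s)
            ((Vcont hp hXp hhlim hXlim).intervalIntegrable s x)]
        ring_nf
      have hnn : 0 ≤ ∫ u in s..x, Vf h X u :=
        intervalIntegral.integral_nonneg hs.2 fun u _ => Vnonneg hp hXp hhlim hXlim u
      linarith
  have h2 := mul_le_mul_of_nonneg_left (Bupper hp hXp hhlim hXlim hx) hx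
  linarith

include hp hXp hhlim hXlim in
lemma GcontDiff : ContDiff ℝ 2 (Gf h X) := by
  have hdG : deriv (Gf h X) = Bf h X := funext fun x => (GhasDeriv hp hXp hhlim hXlim x).deriv
  have hdB : deriv (Bf h X) = Vf h X := funext fun x => (BhasDeriv hp hXp hhlim hXlim x).deriv
  rw [show (2 : WithTop ℕ∞) = 1 + 1 by norm_num, contDiff_succ_iff_deriv]
  refine ⟨fun x => (GhasDeriv hp hXp hhlim hXlim x).differentiableAt, by simp, ?_⟩
  rw [hdG, contDiff_one_iff_deriv, hdB]
  exact ⟨fun x => (BhasDeriv hp hXp hhlim hXlim x).differentiableAt, Vcont hp hXp hhlim hXlim⟩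

end

end Stmt1Aux

open Stmt1Aux

theorem stmt_1 (h c : ℕ → ℝ)
    (hh : Antitone h) (hc : Antitone c)
    (hhb : ∀ n, 0 < h n ∧ h n < π) (hcb : ∀ n, 0 < c n ∧ c n < π)
    (hhlim : Tendsto h atTop (nhds 0)) (hclim : Tendsto c atTop (nhds 0)) :
    ∃ f : ℝ → ℝ, ContDiff ℝ 2 f ∧ (∀ t, f (-t) = f t) ∧ (∀ t, f (t + 2 * π) = f t) ∧
      f 0 = 0 ∧ StrictMonoOn f (Set.Icc 0 π) ∧ ∀ n : ℕ, 1 ≤ n → f (c n) ≤ h n := by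
  set X : ℕ → ℝ := fun n => 1 - Real.cos (c n) with hXdef
  have hp : ∀ n, 0 < h n := fun n => (hhb n).1
  have hXp : ∀ n, 0 < X n := by
    intro n
    have : Real.cos (c n) < Real.cos 0 :=
      Real.strictAntiOn_cos ⟨le_rfl, Real.pi_pos.le⟩ ⟨(hcb n).1.le, (hcb n).2.le⟩ (hcb n).1
    simp only [Real.cos_zero] at this
    simp [hXdef]; linarith
  have hXlim : Tendsto X atTop (nhds 0) := by
    have hcos : Tendsto (fun n => Real.cos (c n)) atTop (nhds (Real.cos 0)) :=
      (Real.continuous_cos.continuousAt.tendsto).comp hclim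
    rw [Real.cos_zero] at hcos
    simpa [hXdef] using (tendsto_const_nhds (x := (1:ℝ)) (f := atTop)).sub hcos
  refine ⟨fun t => Gf h X (1 - Real.cos t) / 4, ?_, ?_, ?_, ?_, ?_, ?_⟩
  · exact ((GcontDiff hp hXp hhlim hXlim).comp
      (contDiff_const.sub Real.contDiff_cos)).div_const 4
  · intro t
    show Gf h X (1 - Real.cos (-t)) / 4 = Gf h X (1 - Real.cos t) / 4
    rw [Real.cos_neg]
  · intro t
    show Gf h X (1 - Real.cos (t + 2 * π)) / 4 = Gf h X (1 - Real.cos t) / 4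
    rw [Real.cos_add_two_pi]
  · simp [Gzero]
  · intro a ha b hb hab
    have h1 : 1 - Real.cos a < 1 - Real.cos b := by
      have := Real.strictAntiOn_cos ha hb hab
      linarith
    have h2 : (0:ℝ) ≤ 1 - Real.cos a := by
      have := Real.cos_le_one a; linarith
    have := Gmono hp hXp hhlim hXlim h2 (le_trans h2 h1.le) h1
    linarith
  · intro n _
    have hx2 : X n ≤ 2 := by
      have := Real.neg_one_le_cos (c n)
      simp [hXdef]; linarith
    have hG := Gupper hp hXp hhlim hXlim (hXp n).le
    have hH : Hf h X (X n) ≤ h n := Hle hp le_rfl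
    have hHn : 0 ≤ Hf h X (X n) := Hnonneg hp _
    have e1 : 0 ≤ X n * Hf h X (X n) := mul_nonneg (hXp n).le hHn
    have e2 : X n * (X n * Hf h X (X n)) ≤ 2 * (X n * Hf h X (X n)) :=
      mul_le_mul_of_nonneg_right hx2 e1
    have e3 : X n * Hf h X (X n) ≤ 2 * Hf h X (X n) := mul_le_mul_of_nonneg_right hx2 hHn
    have hb : Gf h X (X n) ≤ 4 * h n := by linarith
    show Gf h X (1 - Real.cos (c n)) / 4 ≤ h n
    rw [show (1 - Real.cos (c n)) = X n from rfl]
    linarith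
end

section
/- Let Ψ be an Orlicz function, θ > 0, and suppose that for A > 1 and u ≥ u₀ one has Ψ(Au) ≤ Ψ(u)(log Ψ(u))^θ, with Ψ(u₀) ≥ e². Set p_n = Ψ(Aⁿ) and l_n = log p_n. Then for n large, l_{n+1} ≤ l_n + θ log l_n, and moreover l_n ≥ n log A; combining these, log Ψ(Aⁿ) = O(n log n) as n → ∞. -/
set_option maxHeartbeats 1000000


open Real Filter

theorem stmt_16 (Ψ : ℝ → ℝ) (hconv : ConvexOn ℝ (Set.Ici 0) Ψ)
    (hmono : MonotoneOn Ψ (Set.Ici 0)) (hΨ0 : Ψ 0 = 0)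
    (hgex : ∃ x₁ : ℝ, ∀ x ≥ x₁, x ≤ Ψ x)
    (A θ u₀ : ℝ) (hA : 1 < A) (hθ : 0 < θ)
    (hbound : ∀ u ≥ u₀, Ψ (A * u) ≤ Ψ u * (Real.log (Ψ u)) ^ θ)
    (hΨu₀ : Real.exp 2 ≤ Ψ u₀)
    (l : ℕ → ℝ) (hl : ∀ n, l n = Real.log (Ψ (A ^ n))) :
    (∃ n₁ : ℕ, ∀ n ≥ n₁, l (n + 1) ≤ l n + θ * Real.log (l n)) ∧
    (∃ n₂ : ℕ, ∀ n ≥ n₂, (n : ℝ) * Real.log A ≤ l n) ∧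
    (∃ C : ℝ, ∃ n₃ : ℕ, ∀ n ≥ n₃, l n ≤ C * (n : ℝ) * Real.log n) := by
  obtain ⟨x₁, hx₁⟩ := hgex
  have hApos : (0:ℝ) < A := lt_trans one_pos hA
  obtain ⟨n₀, hn₀⟩ := Filter.eventually_atTop.mp
    ((tendsto_pow_atTop_atTop_of_one_lt hA).eventually_ge_atTop (max (max u₀ x₁) (exp 2)))
  have hAgx : ∀ n ≥ n₀, x₁ ≤ A ^ n := fun n hn =>
    le_trans ((le_max_right u₀ x₁).trans (le_max_left _ _)) (hn₀ n hn)
  have hAgu : ∀ n ≥ n₀, u₀ ≤ A ^ n := fun n hn =>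
    le_trans ((le_max_left u₀ x₁).trans (le_max_left _ _)) (hn₀ n hn)
  have hAge : ∀ n ≥ n₀, exp 2 ≤ A ^ n := fun n hn =>
    le_trans (le_max_right _ _) (hn₀ n hn)
  have hPn : ∀ n ≥ n₀, exp 2 ≤ Ψ (A ^ n) := fun n hn =>
    le_trans (hAge n hn) (hx₁ _ (hAgx n hn))
  have hPpos : ∀ n ≥ n₀, 0 < Ψ (A ^ n) := fun n hn =>
    lt_of_lt_of_le (exp_pos 2) (hPn n hn)
  have hl2 : ∀ n ≥ n₀, 2 ≤ l n := by
    intro n hn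
    rw [hl n]
    exact (Real.le_log_iff_exp_le (hPpos n hn)).mpr (hPn n hn)
  -- Part 1
  have h1 : ∀ n ≥ n₀, l (n + 1) ≤ l n + θ * Real.log (l n) := by
    intro n hn
    have hn1 : n + 1 ≥ n₀ := le_trans hn (Nat.le_succ n)
    have hb := hbound (A ^ n) (hAgu n hn)
    have hAn1 : (A:ℝ) ^ (n + 1) = A * A ^ n := by ring
    have hlogpos : 0 < Real.log (Ψ (A ^ n)) := by
      have := hl2 n hn; rw [hl n] at this; linarith
    have hb' : Ψ (A ^ (n + 1)) ≤ Ψ (A ^ n) * (Real.log (Ψ (A ^ n))) ^ θ := by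
      rw [hAn1]; exact hb
    have hpos1 : 0 < Ψ (A ^ (n + 1)) := hPpos (n + 1) hn1
    rw [hl (n + 1), hl n]
    calc Real.log (Ψ (A ^ (n + 1)))
        ≤ Real.log (Ψ (A ^ n) * (Real.log (Ψ (A ^ n))) ^ θ) :=
          Real.log_le_log hpos1 hb'
      _ = Real.log (Ψ (A ^ n)) + θ * Real.log (Real.log (Ψ (A ^ n))) := by
          rw [Real.log_mul (ne_of_gt (hPpos n hn))
            (ne_of_gt (Real.rpow_pos_of_pos hlogpos θ)),
            Real.log_rpow hlogpos]
  -- Part 2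
  have h2 : ∀ n ≥ n₀, (n : ℝ) * Real.log A ≤ l n := by
    intro n hn
    rw [hl n]
    calc (n : ℝ) * Real.log A = Real.log (A ^ n) := by rw [Real.log_pow]
      _ ≤ Real.log (Ψ (A ^ n)) := Real.log_le_log (pow_pos hApos n) (hx₁ _ (hAgx n hn))
  refine ⟨⟨n₀, h1⟩, ⟨n₀, h2⟩, ?_⟩
  -- Part 3
  set n₃ : ℕ := max n₀ 3 with hn₃def
  set C : ℝ := max (16 * θ ^ 2 + 4 * θ + 1) (l n₃) with hCdef
  have hC1 : 1 ≤ C := le_trans (by nlinarith) (le_max_left _ _)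
  have hCθ2 : 16 * θ ^ 2 ≤ C := le_trans (by nlinarith) (le_max_left _ _)
  have hCθ : 4 * θ ≤ C := le_trans (by nlinarith) (le_max_left _ _)
  have hCl : l n₃ ≤ C := le_max_right _ _
  have hCpos : 0 < C := lt_of_lt_of_le one_pos hC1
  have hexp13 : exp 1 ≤ 3 := le_trans Real.exp_one_lt_d9.le (by norm_num)
  have hn₀3 : n₀ ≤ n₃ := le_max_left _ _
  have h3n₃ : (3:ℕ) ≤ n₃ := le_max_right _ _
  have hlog3 : ∀ n : ℕ, n ≥ n₃ → 1 ≤ Real.log n ∧ (3:ℝ) ≤ n := by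
    intro n hn
    have h3n : (3:ℕ) ≤ n := le_trans h3n₃ hn
    have h3r : (3:ℝ) ≤ n := by exact_mod_cast h3n
    have hnpos : (0:ℝ) < n := by linarith
    exact ⟨(Real.le_log_iff_exp_le hnpos).mpr (le_trans hexp13 h3r), h3r⟩
  clear hCdef hn₃def
  clear_value C n₃
  -- key bound on log C
  have hlogC : θ * Real.log C ≤ C / 2 := by
    have hs : Real.sqrt C ^ 2 = C := Real.sq_sqrt hCpos.le
    have hsnn : 0 ≤ Real.sqrt C := Real.sqrt_nonneg C
    have h4θ : 4 * θ ≤ Real.sqrt C := by nlinarith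
    have hls : Real.log (Real.sqrt C) = Real.log C / 2 := Real.log_sqrt hCpos.le
    have hls2 : Real.log (Real.sqrt C) ≤ Real.sqrt C - 1 :=
      Real.log_le_sub_one_of_pos (by positivity)
    nlinarith [hθ.le]
  refine ⟨C, n₃, ?_⟩
  intro n hn
  induction n, hn using Nat.le_induction with
  | base =>
      obtain ⟨hlogn, h3r⟩ := hlog3 n₃ le_rfl
      have e1 : C * 1 ≤ C * Real.log ↑n₃ := mul_le_mul_of_nonneg_left hlogn hCpos.le
      have hClog : 0 ≤ C * Real.log ↑n₃ := by linarith
      nlinarith [mul_nonneg hClog (show (0:ℝ) ≤ (↑n₃:ℝ) - 1 by linarith)]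
  | succ n hn ih =>
      obtain ⟨hlogn, h3r⟩ := hlog3 n hn
      have hn0 : n ≥ n₀ := le_trans hn₀3 hn
      have hnpos : (0:ℝ) < n := by linarith
      have hlognpos : (0:ℝ) < Real.log n := by linarith
      have hln2 : 2 ≤ l n := hl2 n hn0
      have hCn : 0 < C * n * Real.log n := by positivity
      have step1 : l (n + 1) ≤ l n + θ * Real.log (l n) := h1 n hn0
      have step2 : Real.log (l n) ≤ Real.log (C * (n:ℝ) * Real.log n) :=
        Real.log_le_log (by linarith) ih
      have hsplit : Real.log (C * (n:ℝ) * Real.log n)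
          = Real.log C + Real.log n + Real.log (Real.log n) := by
        rw [Real.log_mul (by positivity) (ne_of_gt hlognpos),
          Real.log_mul (ne_of_gt hCpos) (ne_of_gt hnpos)]
      have hloglog : Real.log (Real.log n) ≤ Real.log n := by
        have h1' : Real.log n ≤ n := le_trans (Real.log_le_sub_one_of_pos hnpos) (by linarith)
        exact Real.log_le_log hlognpos h1'
      have hkey : θ * Real.log (C * (n:ℝ) * Real.log n) ≤ C * Real.log n := by
        rw [hsplit]
        have a1 : θ * Real.log C ≤ C / 2 * Real.log n := by
          nlinarith [mul_nonneg (show (0:ℝ) ≤ C/2 by linarith) (show (0:ℝ) ≤ Real.log n - 1 by linarith)]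
        have a2 : θ * (Real.log n + Real.log (Real.log n)) ≤ 2 * θ * Real.log n := by
          nlinarith [mul_nonneg hθ.le (sub_nonneg.mpr hloglog)]
        have t : 0 ≤ (C/2 - 2*θ) * Real.log n :=
          mul_nonneg (by linarith) hlognpos.le
        nlinarith [a1, a2, t]
      have hmonolog : Real.log n ≤ Real.log ((n:ℝ) + 1) :=
        Real.log_le_log hnpos (by linarith)
      have hfinal : C * (n:ℝ) * Real.log n + C * Real.log n
          ≤ C * ((n:ℝ) + 1) * Real.log ((n:ℝ) + 1) := by
        nlinarith [mul_nonneg (mul_nonneg hCpos.le hnpos.le) (sub_nonneg.mpr hmonolog),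
          mul_nonneg hCpos.le (sub_nonneg.mpr hmonolog)]
      have hstep2' := mul_le_mul_of_nonneg_left step2 hθ.le
      push_cast
      calc l (n + 1) ≤ l n + θ * Real.log (l n) := step1
        _ ≤ C * (n:ℝ) * Real.log n + θ * Real.log (C * (n:ℝ) * Real.log n) := by linarith
        _ ≤ C * (n:ℝ) * Real.log n + C * Real.log n := by linarith
        _ ≤ C * ((n:ℝ) + 1) * Real.log ((n:ℝ) + 1) := hfinal
end
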